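/- arXiv:1912.12642 — 2 statements merged into one kernel-verified Lean document; each statement's English description precedes it below -/
import Mathlib

section
/- Let (M, η, ω) be a closed connected cosymplectic manifold and let Φ = {φ_t} be any co-Hamiltonian isotopy of (M, η, ω). Then the function x ↦ ∫₀¹ η(φ̇_s)(φ_s(x)) ds on M is identically zero. -/
open Manifold MeasureTheory Function Set

noncomputable section

variable {E : Type*} [NormedAddCommGroup E] [NormedSpace ℝ E]
variable {M : Type*} [TopologicalSpace M] [ChartedSpace E M]

/-- differential of a self-map of `M`, with the canonical identification of tangent spaces. -/
def mfdSelf (f : M → M) (x : M) : E →L[ℝ] E := mfderiv 𝓘(ℝ, E) 𝓘(ℝ, E) f x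

/-- differential of a map from the model space into `M`. -/
def mfdIn (f : E → M) (y : E) : E →L[ℝ] E := mfderiv 𝓘(ℝ, E) 𝓘(ℝ, E) f y

/-- local representative of a 1-form in the preferred chart at `x₀`. -/
def oneFormLocal (η : M → E →L[ℝ] ℝ) (x₀ : M) : E → E →L[ℝ] ℝ := fun y =>
  (η ((extChartAt 𝓘(ℝ, E) x₀).symm y)).comp (mfdIn (extChartAt 𝓘(ℝ, E) x₀).symm y)

/-- A (smooth) 1-form is closed iff the antisymmetrized derivative of its local
representative vanishes everywhere. -/
def IsClosedOneForm (η : M → E →L[ℝ] ℝ) : Prop :=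
  ∀ x₀ : M, ∀ u v : E,
    fderiv ℝ (oneFormLocal η x₀) (extChartAt 𝓘(ℝ, E) x₀ x₀) u v =
    fderiv ℝ (oneFormLocal η x₀) (extChartAt 𝓘(ℝ, E) x₀ x₀) v u

/-- local representative of a 2-form in the preferred chart at `x₀`. -/
def twoFormLocal (ω : M → E →L[ℝ] E →L[ℝ] ℝ) (x₀ : M) : E → E →L[ℝ] E →L[ℝ] ℝ := fun y =>
  (((ω ((extChartAt 𝓘(ℝ, E) x₀).symm y)).comp
      (mfdIn (extChartAt 𝓘(ℝ, E) x₀).symm y)).flip.comp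
      (mfdIn (extChartAt 𝓘(ℝ, E) x₀).symm y)).flip

/-- A (smooth) 2-form is closed iff the cyclic sum of the derivative of its local
representative vanishes everywhere. -/
def IsClosedTwoForm (ω : M → E →L[ℝ] E →L[ℝ] ℝ) : Prop :=
  ∀ x₀ : M, ∀ u v w : E,
    fderiv ℝ (twoFormLocal ω x₀) (extChartAt 𝓘(ℝ, E) x₀ x₀) u v w +
    fderiv ℝ (twoFormLocal ω x₀) (extChartAt 𝓘(ℝ, E) x₀ x₀) v w u +
    fderiv ℝ (twoFormLocal ω x₀) (extChartAt 𝓘(ℝ, E) x₀ x₀) w u v = 0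

/-- cosymplectic structure `(η, ω)` on the manifold `M`. -/
structure IsCosymplectic (η : M → E →L[ℝ] ℝ) (ω : M → E →L[ℝ] E →L[ℝ] ℝ) : Prop where
  smooth_eta : ContMDiff 𝓘(ℝ, E) 𝓘(ℝ, E →L[ℝ] ℝ) (⊤ : ℕ∞) η
  smooth_omega : ContMDiff 𝓘(ℝ, E) 𝓘(ℝ, E →L[ℝ] E →L[ℝ] ℝ) (⊤ : ℕ∞) ω
  antisymm : ∀ x u v, ω x u v = - ω x v u
  closed_eta : IsClosedOneForm η
  closed_omega : IsClosedTwoForm ω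
  nondeg : ∀ x : M, Function.Bijective fun u : E => ω x u + η x u • η x

/-- velocity vector `φ̇ₜ(x) ∈ T_{φₜ(x)}M ≃ E` of an isotopy. -/
def isoVel (φ : ℝ → M → M) (t : ℝ) (x : M) : E :=
  mfderiv 𝓘(ℝ, ℝ) 𝓘(ℝ, E) (fun s => φ s x) t (show TangentSpace 𝓘(ℝ, ℝ) t from (1:ℝ))

/-- the function `C(Φ, η)ᵗ : x ↦ η(φ̇ₜ)(φₜ(x))`. -/
def Cfun (η : M → E →L[ℝ] ℝ) (φ : ℝ → M → M) (t : ℝ) (x : M) : ℝ :=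
  η (φ t x) (isoVel φ t x)

structure IsCosymplecticIsotopy (η : M → E →L[ℝ] ℝ) (ω : M → E →L[ℝ] E →L[ℝ] ℝ)
    (φ : ℝ → M → M) : Prop where
  smooth : ContMDiff (𝓘(ℝ, ℝ).prod 𝓘(ℝ, E)) 𝓘(ℝ, E) (⊤ : ℕ∞) fun p : ℝ × M => φ p.1 p.2
  init : ∀ x, φ 0 x = x
  bij : ∀ t, Function.Bijective (φ t)
  pull_eta : ∀ t x (v : E), η (φ t x) (mfdSelf (φ t) x v) = η x v
  pull_omega : ∀ t x (u v : E),
    ω (φ t x) (mfdSelf (φ t) x u) (mfdSelf (φ t) x v) = ω x u v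

/-- co-Hamiltonian isotopy with generator `F`, i.e. `I_{η,ω}(φ̇ₜ) = dFₜ`. -/
structure IsCoHamIsotopy (η : M → E →L[ℝ] ℝ) (ω : M → E →L[ℝ] E →L[ℝ] ℝ)
    (φ : ℝ → M → M) (F : ℝ → M → ℝ) extends IsCosymplecticIsotopy η ω φ : Prop where
  smoothF : ContMDiff (𝓘(ℝ, ℝ).prod 𝓘(ℝ, E)) 𝓘(ℝ, ℝ) (⊤ : ℕ∞) fun p : ℝ × M => F p.1 p.2
  ham : ∀ t x (v : E),
    ω (φ t x) (isoVel φ t x) v + η (φ t x) (isoVel φ t x) * η (φ t x) v =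
      mfderiv 𝓘(ℝ, E) 𝓘(ℝ, ℝ) (F t) (φ t x) v

/-- oscillation of a function. -/
def osc {N : Type*} (f : N → ℝ) : ℝ := sSup (range f) - sInf (range f)

/-- `L^{(1,∞)}` co-Hofer length. -/
def lCH1 (η : M → E →L[ℝ] ℝ) (φ : ℝ → M → M) (F : ℝ → M → ℝ) : ℝ :=
  ∫ t in (0:ℝ)..1, (osc (F t) + ⨆ x : M, |Cfun η φ t x|)

/-- `L^∞` co-Hofer length. -/
def lCHtop (η : M → E →L[ℝ] ℝ) (φ : ℝ → M → M) (F : ℝ → M → ℝ) : ℝ :=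
  ⨆ t : Icc (0:ℝ) 1, (osc (F t.1) + ⨆ x : M, |Cfun η φ t.1 x|)

def DCH1 (η : M → E →L[ℝ] ℝ) (φ : ℝ → M → M) (F : ℝ → M → ℝ)
    (ψ : ℝ → M → M) (G : ℝ → M → ℝ) : ℝ :=
  ∫ t in (0:ℝ)..1,
    (osc (fun x : M => F t x - G t x) + ⨆ x : M, |Cfun η φ t x - Cfun η ψ t x|)

def DCHtop (η : M → E →L[ℝ] ℝ) (φ : ℝ → M → M) (F : ℝ → M → ℝ)
    (ψ : ℝ → M → M) (G : ℝ → M → ℝ) : ℝ :=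
  ⨆ t : Icc (0:ℝ) 1,
    (osc (fun x : M => F t.1 x - G t.1 x) + ⨆ x : M, |Cfun η φ t.1 x - Cfun η ψ t.1 x|)

def hamNorm (ξ : ℝ → ℝ) : ℝ :=
  (⨆ t : Icc (0:ℝ) 1, |ξ t.1|) + ∫ t in (0:ℝ)..1, |deriv ξ t|

def BoundaryFlat (F : ℝ → M → ℝ) : Prop :=
  ∃ δ ∈ Ioo (0:ℝ) 1, ∀ t ∈ Ico (0:ℝ) δ ∪ Ioc (1 - δ) 1, ∀ x : M, F t x = 0


namespace CoHamZero

open Filter Topology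

variable {E : Type*} [NormedAddCommGroup E] [NormedSpace ℝ E] [FiniteDimensional ℝ E]
variable {M : Type*} [TopologicalSpace M] [ChartedSpace E M]
  [IsManifold 𝓘(ℝ, E) (⊤ : ℕ∞) M]
variable {η : M → E →L[ℝ] ℝ} {ω : M → E →L[ℝ] E →L[ℝ] ℝ} {φ : ℝ → M → M} {F : ℝ → M → ℝ}

set_option linter.unusedSectionVars false

/-- The scalar function `x ↦ dF_t(φ_t x)(φ̇_t(x))`. -/
def Lam (F : ℝ → M → ℝ) (φ : ℝ → M → M) (t : ℝ) (x : M) : ℝ :=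
  mfderiv 𝓘(ℝ, E) 𝓘(ℝ, ℝ) (F t) (φ t x) (isoVel (E := E) φ t x)

/-- fixed embedding `E →L ℝ × E`, `w ↦ (0, w)`. -/
def J (E : Type*) [NormedAddCommGroup E] [NormedSpace ℝ E] : E →L[ℝ] ℝ × E :=
  (0 : E →L[ℝ] ℝ).prod (ContinuousLinearMap.id ℝ E)

@[simp] lemma J_apply {E : Type*} [NormedAddCommGroup E] [NormedSpace ℝ E] (w : E) :
    (J E w : ℝ × E) = (0, w) := by
  simp [J]

section calculus

variable {X : Type*} [NormedAddCommGroup X] [NormedSpace ℝ X]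

lemma hasDerivAt_slice1 {f : ℝ × E → X} {t : ℝ} {u : E} (hf : DifferentiableAt ℝ f (t, u)) :
    HasDerivAt (fun σ => f (σ, u)) (fderiv ℝ f (t, u) (1, 0)) t := by
  have h1 : HasDerivAt (fun σ : ℝ => ((σ : ℝ), u)) ((1 : ℝ), (0 : E)) t :=
    (hasDerivAt_id t).prodMk (hasDerivAt_const t u)
  exact hf.hasFDerivAt.comp_hasDerivAt t h1

lemma hasFDerivAt_slice2 {f : ℝ × E → X} {t : ℝ} {u : E} (hf : DifferentiableAt ℝ f (t, u)) :
    HasFDerivAt (fun v => f (t, v)) ((fderiv ℝ f (t, u)).comp (J E)) u := by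
  have h1 : HasFDerivAt (fun v : E => ((t : ℝ), v)) (J E) u :=
    ((hasFDerivAt_const t u).prodMk (hasFDerivAt_id u))
  exact hf.hasFDerivAt.comp u h1

end calculus

section charts

/-- On model-space-modelled manifolds, the `mfderiv` of a map into a vector space is the
`fderiv` of its representative in the preferred chart. -/
lemma mfderiv_eq_fderiv_comp {X : Type*} [NormedAddCommGroup X] [NormedSpace ℝ X]
    (g : M → X) (x₀ : M) (h : MDifferentiableAt 𝓘(ℝ, E) 𝓘(ℝ, X) g x₀) :
    mfderiv 𝓘(ℝ, E) 𝓘(ℝ, X) g x₀ =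
      fderiv ℝ (fun u => g ((extChartAt 𝓘(ℝ, E) x₀).symm u)) (extChartAt 𝓘(ℝ, E) x₀ x₀) := by
  simp only [mfderiv, h, ↓reduceIte]
  simp only [writtenInExtChartAt, extChartAt_model_space_eq_id, PartialEquiv.refl_coe,
    Function.comp_def, id_eq, modelWithCornersSelf_coe, Set.range_id, fderivWithin_univ]
  rfl

lemma mdiffAt_extChartAt_symm {x₀ : M} {u : E} (h : u ∈ (extChartAt 𝓘(ℝ, E) x₀).target) :
    MDifferentiableAt 𝓘(ℝ, E) 𝓘(ℝ, E) (extChartAt 𝓘(ℝ, E) x₀).symm u := by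
  have := mdifferentiableWithinAt_extChartAt_symm (I := 𝓘(ℝ, E)) (x := x₀) h
  rwa [modelWithCornersSelf_coe, Set.range_id, mdifferentiableWithinAt_univ] at this

lemma mdiffAt_extChartAt' {x₀ y : M} (h : y ∈ (extChartAt 𝓘(ℝ, E) x₀).source) :
    MDifferentiableAt 𝓘(ℝ, E) 𝓘(ℝ, E) (extChartAt 𝓘(ℝ, E) x₀) y :=
  mdifferentiableAt_extChartAt (by rwa [extChartAt_source] at h)

lemma chart_symm_comp_deriv (x₀ : M) {y : M} (hy : y ∈ (extChartAt 𝓘(ℝ, E) x₀).source)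
    (v : E) :
    mfderiv 𝓘(ℝ, E) 𝓘(ℝ, E) (extChartAt 𝓘(ℝ, E) x₀).symm (extChartAt 𝓘(ℝ, E) x₀ y)
      (mfderiv 𝓘(ℝ, E) 𝓘(ℝ, E) (extChartAt 𝓘(ℝ, E) x₀) y v) = v := by
  have h1 := mdiffAt_extChartAt' (x₀ := x₀) hy
  have h2 := mdiffAt_extChartAt_symm (x₀ := x₀) ((extChartAt 𝓘(ℝ, E) x₀).map_source hy)
  have h3 := mfderiv_comp (x := y) (I := 𝓘(ℝ, E)) (I' := 𝓘(ℝ, E)) (I'' := 𝓘(ℝ, E)) h2 h1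
  have h4 : mfderiv 𝓘(ℝ, E) 𝓘(ℝ, E) ((extChartAt 𝓘(ℝ, E) x₀).symm ∘ (extChartAt 𝓘(ℝ, E) x₀)) y
      = mfderiv 𝓘(ℝ, E) 𝓘(ℝ, E) (id : M → M) y := by
    apply Filter.EventuallyEq.mfderiv_eq
    filter_upwards [extChartAt_source_mem_nhds' (I := 𝓘(ℝ, E)) hy] with z hz
    simp only [Function.comp_apply, id_eq]
    exact (extChartAt 𝓘(ℝ, E) x₀).left_inv hz
  have h8 : mfderiv 𝓘(ℝ, E) 𝓘(ℝ, E)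
      ((extChartAt 𝓘(ℝ, E) x₀).symm ∘ (extChartAt 𝓘(ℝ, E) x₀)) y v = v := by
    rw [h4, mfderiv_id]
    rfl
  rw [h3] at h8
  exact h8

lemma chart_comp_symm_deriv (x₀ : M) {u : E} (hu : u ∈ (extChartAt 𝓘(ℝ, E) x₀).target)
    (v : E) :
    mfderiv 𝓘(ℝ, E) 𝓘(ℝ, E) (extChartAt 𝓘(ℝ, E) x₀) ((extChartAt 𝓘(ℝ, E) x₀).symm u)
      (mfderiv 𝓘(ℝ, E) 𝓘(ℝ, E) (extChartAt 𝓘(ℝ, E) x₀).symm u v) = v := by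
  have h2 := mdiffAt_extChartAt_symm (x₀ := x₀) hu
  have h1 := mdiffAt_extChartAt' (x₀ := x₀) ((extChartAt 𝓘(ℝ, E) x₀).map_target hu)
  have h3 := mfderiv_comp (x := u) (I := 𝓘(ℝ, E)) (I' := 𝓘(ℝ, E)) (I'' := 𝓘(ℝ, E)) h1 h2
  have h4 : mfderiv 𝓘(ℝ, E) 𝓘(ℝ, E) ((extChartAt 𝓘(ℝ, E) x₀) ∘ (extChartAt 𝓘(ℝ, E) x₀).symm) u
      = mfderiv 𝓘(ℝ, E) 𝓘(ℝ, E) (id : E → E) u := by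
    apply Filter.EventuallyEq.mfderiv_eq
    filter_upwards [extChartAt_target_mem_nhds' (I := 𝓘(ℝ, E)) hu] with z hz
    simp only [Function.comp_apply, id_eq]
    exact (extChartAt 𝓘(ℝ, E) x₀).right_inv hz
  have h8 : mfderiv 𝓘(ℝ, E) 𝓘(ℝ, E)
      ((extChartAt 𝓘(ℝ, E) x₀) ∘ (extChartAt 𝓘(ℝ, E) x₀).symm) u v = v := by
    rw [h4, mfderiv_id]
    rfl
  rw [h3] at h8
  exact h8

lemma chart_deriv_bij (x₀ : M) {y : M} (hy : y ∈ (extChartAt 𝓘(ℝ, E) x₀).source) :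
    Function.Bijective (mfderiv 𝓘(ℝ, E) 𝓘(ℝ, E) (extChartAt 𝓘(ℝ, E) x₀) y) := by
  constructor
  · intro v w hvw
    have hv := chart_symm_comp_deriv x₀ hy v
    have hw := chart_symm_comp_deriv x₀ hy w
    rw [← hv, ← hw, hvw]
  · intro v
    refine ⟨mfderiv 𝓘(ℝ, E) 𝓘(ℝ, E) (extChartAt 𝓘(ℝ, E) x₀).symm (extChartAt 𝓘(ℝ, E) x₀ y) v, ?_⟩
    have h2' := chart_comp_symm_deriv x₀ ((extChartAt 𝓘(ℝ, E) x₀).map_source hy) v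
    rwa [(extChartAt 𝓘(ℝ, E) x₀).left_inv hy] at h2'

end charts

section smoothness

lemma curve_cmdiff (hs : ContMDiff (𝓘(ℝ, ℝ).prod 𝓘(ℝ, E)) 𝓘(ℝ, E) (⊤ : ℕ∞)
    fun p : ℝ × M => φ p.1 p.2) (x : M) :
    ContMDiff 𝓘(ℝ, ℝ) 𝓘(ℝ, E) (⊤ : ℕ∞) fun s => φ s x :=
  hs.comp (contMDiff_id.prodMk contMDiff_const)

lemma map_cmdiff (hs : ContMDiff (𝓘(ℝ, ℝ).prod 𝓘(ℝ, E)) 𝓘(ℝ, E) (⊤ : ℕ∞)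
    fun p : ℝ × M => φ p.1 p.2) (t : ℝ) :
    ContMDiff 𝓘(ℝ, E) 𝓘(ℝ, E) (⊤ : ℕ∞) (φ t) :=
  hs.comp (contMDiff_const.prodMk contMDiff_id)

lemma Fmap_cmdiff (hs : ContMDiff (𝓘(ℝ, ℝ).prod 𝓘(ℝ, E)) 𝓘(ℝ, ℝ) (⊤ : ℕ∞)
    fun p : ℝ × M => F p.1 p.2) (t : ℝ) :
    ContMDiff 𝓘(ℝ, E) 𝓘(ℝ, ℝ) (⊤ : ℕ∞) (F t) :=
  hs.comp (contMDiff_const.prodMk contMDiff_id)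

/-- the curve `σ ↦ F t₀ (φ σ x)` has derivative `Lam F φ t₀ x` at `σ = t₀`. -/
lemma hasDerivAt_F_curve (hs : ContMDiff (𝓘(ℝ, ℝ).prod 𝓘(ℝ, E)) 𝓘(ℝ, E) (⊤ : ℕ∞)
    (fun p : ℝ × M => φ p.1 p.2))
    (hsF : ContMDiff (𝓘(ℝ, ℝ).prod 𝓘(ℝ, E)) 𝓘(ℝ, ℝ) (⊤ : ℕ∞) fun p : ℝ × M => F p.1 p.2)
    (t₀ : ℝ) (x : M) :
    HasDerivAt (fun σ => F t₀ (φ σ x)) (Lam (E := E) F φ t₀ x) t₀ := by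
  have hc : HasMFDerivAt 𝓘(ℝ, ℝ) 𝓘(ℝ, E) (fun s => φ s x) t₀
      (mfderiv 𝓘(ℝ, ℝ) 𝓘(ℝ, E) (fun s => φ s x) t₀) :=
    (((curve_cmdiff hs x) t₀).mdifferentiableAt (by simp)).hasMFDerivAt
  have hg : HasMFDerivAt 𝓘(ℝ, E) 𝓘(ℝ, ℝ) (F t₀) (φ t₀ x)
      (mfderiv 𝓘(ℝ, E) 𝓘(ℝ, ℝ) (F t₀) (φ t₀ x)) :=
    (((Fmap_cmdiff hsF t₀) (φ t₀ x)).mdifferentiableAt (by simp)).hasMFDerivAt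
  have hcomp := hg.comp t₀ hc
  have h2 : HasFDerivAt (𝕜 := ℝ) (E := ℝ) (F := ℝ) (fun σ => F t₀ (φ σ x))
      ((mfderiv 𝓘(ℝ, E) 𝓘(ℝ, ℝ) (F t₀) (φ t₀ x)).comp
        (mfderiv 𝓘(ℝ, ℝ) 𝓘(ℝ, E) (fun s => φ s x) t₀)) t₀ := hcomp.hasFDerivAt
  have h3 : HasFDerivAt (𝕜 := ℝ) (E := ℝ) (F := ℝ) (fun σ => F t₀ (φ σ x))
      (ContinuousLinearMap.toSpanSingleton ℝ (Lam (E := E) F φ t₀ x)) t₀ := by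
    have heq : ContinuousLinearMap.toSpanSingleton ℝ (Lam (E := E) F φ t₀ x) =
        (mfderiv 𝓘(ℝ, E) 𝓘(ℝ, ℝ) (F t₀) (φ t₀ x)).comp
          (mfderiv 𝓘(ℝ, ℝ) 𝓘(ℝ, E) (fun s => φ s x) t₀) := by
      ext
      exact one_smul ℝ _
    rw [heq]
    exact h2
  exact h3

/-- the curve `τ ↦ (extChartAt y₀) (φ τ x)`. -/
lemma hasDerivAt_chart_curve (hs : ContMDiff (𝓘(ℝ, ℝ).prod 𝓘(ℝ, E)) 𝓘(ℝ, E) (⊤ : ℕ∞)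
    (fun p : ℝ × M => φ p.1 p.2)) (y₀ : M)
    (t₀ : ℝ) (x : M) (hy : φ t₀ x ∈ (extChartAt 𝓘(ℝ, E) y₀).source) :
    HasDerivAt (fun τ => extChartAt 𝓘(ℝ, E) y₀ (φ τ x))
      (mfderiv 𝓘(ℝ, E) 𝓘(ℝ, E) (extChartAt 𝓘(ℝ, E) y₀) (φ t₀ x) (isoVel (E := E) φ t₀ x))
      t₀ := by
  have hc : HasMFDerivAt 𝓘(ℝ, ℝ) 𝓘(ℝ, E) (fun s => φ s x) t₀
      (mfderiv 𝓘(ℝ, ℝ) 𝓘(ℝ, E) (fun s => φ s x) t₀) :=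
    (((curve_cmdiff hs x) t₀).mdifferentiableAt (by simp)).hasMFDerivAt
  have hg : HasMFDerivAt 𝓘(ℝ, E) 𝓘(ℝ, E) (extChartAt 𝓘(ℝ, E) y₀) (φ t₀ x)
      (mfderiv 𝓘(ℝ, E) 𝓘(ℝ, E) (extChartAt 𝓘(ℝ, E) y₀) (φ t₀ x)) :=
    (mdiffAt_extChartAt' hy).hasMFDerivAt
  have hcomp := hg.comp t₀ hc
  have h2 : HasFDerivAt (𝕜 := ℝ) (E := ℝ) (F := E) (fun τ => extChartAt 𝓘(ℝ, E) y₀ (φ τ x))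
      ((mfderiv 𝓘(ℝ, E) 𝓘(ℝ, E) (extChartAt 𝓘(ℝ, E) y₀) (φ t₀ x)).comp
        (mfderiv 𝓘(ℝ, ℝ) 𝓘(ℝ, E) (fun s => φ s x) t₀)) t₀ := hcomp.hasFDerivAt
  have h3 : HasFDerivAt (𝕜 := ℝ) (E := ℝ) (F := E) (fun τ => extChartAt 𝓘(ℝ, E) y₀ (φ τ x))
      (ContinuousLinearMap.toSpanSingleton ℝ
        (mfderiv 𝓘(ℝ, E) 𝓘(ℝ, E) (extChartAt 𝓘(ℝ, E) y₀) (φ t₀ x) (isoVel (E := E) φ t₀ x)))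
      t₀ := by
    have heq : ContinuousLinearMap.toSpanSingleton ℝ
        (mfderiv 𝓘(ℝ, E) 𝓘(ℝ, E) (extChartAt 𝓘(ℝ, E) y₀) (φ t₀ x) (isoVel (E := E) φ t₀ x)) =
        (mfderiv 𝓘(ℝ, E) 𝓘(ℝ, E) (extChartAt 𝓘(ℝ, E) y₀) (φ t₀ x)).comp
          (mfderiv 𝓘(ℝ, ℝ) 𝓘(ℝ, E) (fun s => φ s x) t₀) := by
      ext
      exact one_smul ℝ _
    exact (congrArg (fun L => HasFDerivAt (fun τ => extChartAt 𝓘(ℝ, E) y₀ (φ τ x)) L t₀) heq).mpr h2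
  exact h3

/-- representation of the derivative of a composite `g ∘ f` read in the chart at `x₀`. -/
lemma fderiv_rep {X : Type*} [NormedAddCommGroup X] [NormedSpace ℝ X]
    (g : M → X) (f : M → M) (x₀ : M)
    (hg : MDifferentiableAt 𝓘(ℝ, E) 𝓘(ℝ, X) g (f x₀))
    (hf : MDifferentiableAt 𝓘(ℝ, E) 𝓘(ℝ, E) f x₀) :
    fderiv ℝ (fun u => g (f ((extChartAt 𝓘(ℝ, E) x₀).symm u))) (extChartAt 𝓘(ℝ, E) x₀ x₀)
      = (mfderiv 𝓘(ℝ, E) 𝓘(ℝ, X) g (f x₀)).comp (mfderiv 𝓘(ℝ, E) 𝓘(ℝ, E) f x₀) := by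
  have h1 := mfderiv_eq_fderiv_comp (g := fun x => g (f x)) x₀ (hg.comp x₀ hf)
  rw [← h1]
  exact mfderiv_comp (x := x₀) hg hf

end smoothness

lemma mfdSelf_bij (hcos : IsCosymplectic η ω) (hΦ : IsCosymplecticIsotopy η ω φ)
    (t : ℝ) (x : M) : Function.Bijective (mfdSelf (E := E) (φ t) x) := by
  have hinj : Function.Injective (mfdSelf (E := E) (φ t) x) := by
    intro u v huv
    have h1 : (fun w : E => ω x w + η x w • η x) u = (fun w : E => ω x w + η x w • η x) v := by
      show ω x u + η x u • η x = ω x v + η x v • η x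
      ext w
      have e1 := hΦ.pull_omega t x u w
      have e2 := hΦ.pull_omega t x v w
      have e3 := hΦ.pull_eta t x u
      have e4 := hΦ.pull_eta t x v
      rw [huv] at e1 e3
      simp only [ContinuousLinearMap.add_apply, ContinuousLinearMap.smul_apply, smul_eq_mul]
      rw [← e1, ← e2, ← e3, ← e4]
    exact (hcos.nondeg x).1 h1
  exact ⟨hinj, (LinearMap.injective_iff_surjective
    (f := ((mfdSelf (E := E) (φ t) x : E →L[ℝ] E) : E →ₗ[ℝ] E))).mp hinj⟩

set_option maxHeartbeats 2000000 in
/-- **Core anchored derivative lemma**. -/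
lemma anchored (hcos : IsCosymplectic η ω) (hΦ : IsCoHamIsotopy η ω φ F) (t₀ : ℝ) (x₀ : M) :
    HasFDerivAt (fun u => Lam (E := E) F φ t₀ ((extChartAt 𝓘(ℝ, E) x₀).symm u))
      (0 : E →L[ℝ] ℝ) (extChartAt 𝓘(ℝ, E) x₀ x₀) := by
  classical
  have hsm := hΦ.smooth
  have hsmF := hΦ.smoothF
  set c' : PartialEquiv M E := extChartAt 𝓘(ℝ, E) x₀ with hc'def
  set a : E := c' x₀ with hadef
  have hx0 : c'.symm a = x₀ := extChartAt_to_inv x₀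
  set y₀ : M := φ t₀ x₀ with hy₀def
  set c : PartialEquiv M E := extChartAt 𝓘(ℝ, E) y₀ with hcdef
  set Fh : ℝ × E → ℝ := fun p => F t₀ (φ p.1 (c'.symm p.2)) with hFhdef
  set ψ : ℝ × E → E := fun p => c (φ p.1 (c'.symm p.2)) with hψdef
  -- basic smoothness of the representatives
  have hsymm_a : ContMDiffAt 𝓘(ℝ, E) 𝓘(ℝ, E) (⊤ : ℕ∞) c'.symm a :=
    (contMDiffOn_extChartAt_symm (I := 𝓘(ℝ, E)) x₀).contMDiffAt
      (extChartAt_target_mem_nhds x₀)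
  have hfst : ContMDiffAt ((𝓘(ℝ, ℝ)).prod 𝓘(ℝ, E)) 𝓘(ℝ, ℝ) (⊤ : ℕ∞)
      (fun p : ℝ × E => p.1) (t₀, a) := contMDiffAt_fst
  have hsnd : ContMDiffAt ((𝓘(ℝ, ℝ)).prod 𝓘(ℝ, E)) 𝓘(ℝ, E) (⊤ : ℕ∞)
      (fun p : ℝ × E => p.2) (t₀, a) := contMDiffAt_snd
  have hpair : ContMDiffAt ((𝓘(ℝ, ℝ)).prod 𝓘(ℝ, E)) ((𝓘(ℝ, ℝ)).prod 𝓘(ℝ, E)) (⊤ : ℕ∞)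
      (fun p : ℝ × E => ((p.1 : ℝ), (c'.symm p.2 : M))) (t₀, a) :=
    ContMDiffAt.prodMk hfst (hsymm_a.comp (t₀, a) hsnd)
  have hΦh : ContMDiffAt ((𝓘(ℝ, ℝ)).prod 𝓘(ℝ, E)) 𝓘(ℝ, E) (⊤ : ℕ∞)
      (fun p : ℝ × E => φ p.1 (c'.symm p.2)) (t₀, a) := by
    have h2 : ContMDiffAt ((𝓘(ℝ, ℝ)).prod 𝓘(ℝ, E)) 𝓘(ℝ, E) (⊤ : ℕ∞)
        (fun p : ℝ × M => φ p.1 p.2) (t₀, c'.symm a) := hsm.contMDiffAt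
    exact h2.comp (t₀, a) hpair
  have hψm : ContMDiffAt ((𝓘(ℝ, ℝ)).prod 𝓘(ℝ, E)) 𝓘(ℝ, E) (⊤ : ℕ∞) ψ (t₀, a) := by
    have hcy : ContMDiffAt 𝓘(ℝ, E) 𝓘(ℝ, E) (⊤ : ℕ∞) (extChartAt 𝓘(ℝ, E) y₀)
        (φ t₀ (c'.symm a)) := by
      rw [hx0]; exact contMDiffAt_extChartAt
    exact hcy.comp (t₀, a) hΦh
  have hFm : ContMDiffAt ((𝓘(ℝ, ℝ)).prod 𝓘(ℝ, E)) 𝓘(ℝ, ℝ) (⊤ : ℕ∞) Fh (t₀, a) := by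
    have hFy : ContMDiffAt 𝓘(ℝ, E) 𝓘(ℝ, ℝ) (⊤ : ℕ∞) (F t₀) (φ t₀ (c'.symm a)) :=
      (Fmap_cmdiff hsmF t₀).contMDiffAt
    exact hFy.comp (t₀, a) hΦh
  have hψ3 : ContDiffAt ℝ 3 ψ (t₀, a) := by
    rw [← modelWithCornersSelf_prod, chartedSpaceSelf_prod] at hψm
    exact hψm.contDiffAt.of_le (by norm_cast)
  have hFh3 : ContDiffAt ℝ 3 Fh (t₀, a) := by
    rw [← modelWithCornersSelf_prod, chartedSpaceSelf_prod] at hFm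
    exact hFm.contDiffAt.of_le (by norm_cast)
  have hψd : DifferentiableAt ℝ ψ (t₀, a) := hψ3.differentiableAt (by norm_num)
  have hψev : ∀ᶠ p in 𝓝 ((t₀ : ℝ), a), ContDiffAt ℝ 3 ψ p := hψ3.eventually (by norm_num)
  have hFhev : ∀ᶠ p in 𝓝 ((t₀ : ℝ), a), ContDiffAt ℝ 3 Fh p := hFh3.eventually (by norm_num)
  -- second derivatives
  have hDψ : ContDiffAt ℝ 2 (fderiv ℝ ψ) (t₀, a) := hψ3.fderiv_right (by norm_num)
  have hDF : ContDiffAt ℝ 2 (fderiv ℝ Fh) (t₀, a) := hFh3.fderiv_right (by norm_num)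
  have hDψd : DifferentiableAt ℝ (fderiv ℝ ψ) (t₀, a) := hDψ.differentiableAt (by norm_num)
  have hDFd : DifferentiableAt ℝ (fderiv ℝ Fh) (t₀, a) := hDF.differentiableAt (by norm_num)
  set Sψ := fderiv ℝ (fderiv ℝ ψ) (t₀, a) with hSψdef
  set SF := fderiv ℝ (fderiv ℝ Fh) (t₀, a) with hSFdef
  have hsymψ : IsSymmSndFDerivAt ℝ ψ (t₀, a) := hψ3.isSymmSndFDerivAt (by norm_num)
  have hsymF : IsSymmSndFDerivAt ℝ Fh (t₀, a) := hFh3.isSymmSndFDerivAt (by norm_num)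
  -- one-parameter families
  set kap : ℝ → E →L[ℝ] ℝ := fun σ => (fderiv ℝ Fh (σ, a)).comp (J E) with hkapdef
  set Bmap : ℝ → E →L[ℝ] E := fun σ => (fderiv ℝ ψ (σ, a)).comp (J E) with hBdef
  have hkapd : HasDerivAt kap ((SF (1, 0)).comp (J E)) t₀ := by
    have h1 : HasDerivAt (fun σ => fderiv ℝ Fh (σ, a)) (SF (1, 0)) t₀ := hasDerivAt_slice1 hDFd
    simpa [hkapdef] using h1.clm_comp (hasDerivAt_const t₀ (J E))
  have hBd : HasDerivAt Bmap ((Sψ (1, 0)).comp (J E)) t₀ := by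
    have h1 : HasDerivAt (fun σ => fderiv ℝ ψ (σ, a)) (Sψ (1, 0)) t₀ := hasDerivAt_slice1 hDψd
    simpa [hBdef] using h1.clm_comp (hasDerivAt_const t₀ (J E))
  -- pointwise algebraic structures
  set Lx : E →L[ℝ] E →L[ℝ] ℝ := ω x₀ + (η x₀).smulRight (η x₀) with hLxdef
  have hLxapp : ∀ u : E, Lx u = ω x₀ u + η x₀ u • η x₀ := by
    intro u; simp [hLxdef]
  have hLxbij : Function.Bijective Lx := by
    have h0 : (Lx : E → E →L[ℝ] ℝ) = fun u => ω x₀ u + η x₀ u • η x₀ := funext hLxapp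
    rw [h0]; exact hcos.nondeg x₀
  set eL : E ≃L[ℝ] (E →L[ℝ] ℝ) :=
    LinearEquiv.toContinuousLinearEquiv
      (LinearEquiv.ofBijective ((Lx : E →L[ℝ] E →L[ℝ] ℝ) : E →ₗ[ℝ] E →L[ℝ] ℝ) hLxbij)
    with heLdef
  have heL : ∀ v : E, eL v = Lx v := fun v => rfl
  set Y : ℝ → E := fun σ => eL.symm (kap σ) with hYdef
  have hYd : HasDerivAt Y (eL.symm ((SF (1, 0)).comp (J E))) t₀ := by
    have h2 := ((eL.symm : (E →L[ℝ] ℝ) →L[ℝ] E).hasFDerivAt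
      (x := kap t₀)).comp_hasDerivAt t₀ hkapd
    simpa [hYdef, Function.comp_def] using h2
  have hkapY : ∀ σ, Lx (Y σ) = kap σ := by
    intro σ
    rw [← heL (Y σ)]
    exact eL.apply_symm_apply _
  -- inverse function setup
  have hB0rep : Bmap t₀ = (mfderiv 𝓘(ℝ, E) 𝓘(ℝ, E) (extChartAt 𝓘(ℝ, E) y₀) (φ t₀ x₀)).comp
      (mfdSelf (E := E) (φ t₀) x₀) := by
    have hgc : MDifferentiableAt 𝓘(ℝ, E) 𝓘(ℝ, E) (extChartAt 𝓘(ℝ, E) y₀) (φ t₀ x₀) :=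
      mdiffAt_extChartAt' (mem_extChartAt_source y₀)
    have hfφ : MDifferentiableAt 𝓘(ℝ, E) 𝓘(ℝ, E) (φ t₀) x₀ :=
      ((map_cmdiff hsm t₀) x₀).mdifferentiableAt (by simp)
    have h2 := (hasFDerivAt_slice2 (f := ψ) (t := t₀) (u := a) hψd).fderiv
    have h1 := fderiv_rep (g := (extChartAt 𝓘(ℝ, E) y₀ : M → E)) (f := φ t₀) x₀ hgc hfφ
    simp only [hBdef]
    rw [← h2]
    rw [show (fun v => ψ (t₀, v)) = fun u => (extChartAt 𝓘(ℝ, E) y₀)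
      ((φ t₀) ((extChartAt 𝓘(ℝ, E) x₀).symm u)) from rfl]
    rw [show a = extChartAt 𝓘(ℝ, E) x₀ x₀ from rfl]
    rw [h1]
    rfl
  have hB0bij : Function.Bijective (Bmap t₀) := by
    rw [hB0rep]
    have hbij1 := chart_deriv_bij (E := E) y₀ (mem_extChartAt_source (I := 𝓘(ℝ, E)) y₀)
    have hbij2 := mfdSelf_bij hcos hΦ.toIsCosymplecticIsotopy t₀ x₀
    exact hbij1.comp hbij2
  set e0 : E ≃L[ℝ] E :=
    LinearEquiv.toContinuousLinearEquiv
      (LinearEquiv.ofBijective ((Bmap t₀ : E →L[ℝ] E) : E →ₗ[ℝ] E) hB0bij) with he0def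
  have he0 : (e0 : E →L[ℝ] E) = Bmap t₀ := by
    ext v; rfl
  have hχB0 : HasFDerivAt (fun u => ψ (t₀, u)) (Bmap t₀) a := hasFDerivAt_slice2 hψd
  have hχ3 : ContDiffAt ℝ 3 (fun u => ψ (t₀, u)) a := by
    have hpair2 : ContDiffAt ℝ 3 (fun u : E => ((t₀ : ℝ), u)) a :=
      (contDiffAt_const (c := t₀)).prodMk contDiffAt_id
    exact hψ3.comp a hpair2
  have hstrict : HasStrictFDerivAt (fun u => ψ (t₀, u)) (e0 : E →L[ℝ] E) a :=
    hχ3.hasStrictFDerivAt' (by rw [he0]; exact hχB0) (by norm_num)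
  set inv : E → E := hstrict.localInverse (fun u => ψ (t₀, u)) e0 a with hinvdef
  set ub : ℝ → E := fun σ => inv (ψ (σ, a)) with hubdef
  have hub0 : ub t₀ = a := hstrict.localInverse_apply_image
  set ξ0 : E := fderiv ℝ ψ (t₀, a) (1, 0) with hξ0def
  have hcurva : HasDerivAt (fun σ => ψ (σ, a)) ξ0 t₀ := hasDerivAt_slice1 hψd
  have hinvd : HasFDerivAt inv ((e0.symm : E ≃L[ℝ] E) : E →L[ℝ] E) (ψ (t₀, a)) :=
    hstrict.to_localInverse.hasFDerivAt
  have hubd : HasDerivAt ub (e0.symm ξ0) t₀ := by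
    have h2 := hinvd.comp_hasDerivAt t₀ hcurva
    simpa [hubdef, Function.comp_def] using h2
  set W : ℝ → E := fun σ => fderiv ℝ ψ (t₀, ub σ) (1, 0) with hWdef
  have hWd : HasDerivAt W (Sψ (0, e0.symm ξ0) (1, 0)) t₀ := by
    have hT : HasFDerivAt (fun u' => fderiv ℝ ψ (t₀, u')) (Sψ.comp (J E)) a :=
      hasFDerivAt_slice2 hDψd
    have hT2 := ((ContinuousLinearMap.apply ℝ E ((1 : ℝ), (0 : E))).hasFDerivAt).comp a hT
    have hT3 : HasFDerivAt (fun u' => fderiv ℝ ψ (t₀, u') (1, 0))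
        ((ContinuousLinearMap.apply ℝ E ((1 : ℝ), (0 : E))).comp (Sψ.comp (J E))) a := hT2
    have hT4 : HasFDerivAt (fun u' => fderiv ℝ ψ (t₀, u') (1, 0))
        ((ContinuousLinearMap.apply ℝ E ((1 : ℝ), (0 : E))).comp (Sψ.comp (J E))) (ub t₀) := by
      rw [hub0]; exact hT3
    have h4 := hT4.comp_hasDerivAt t₀ hubd
    simpa [hWdef, Function.comp_def] using h4
  -- the eventual conditions for the master identity
  have hycont : ContinuousAt (fun σ => φ σ (c'.symm a)) t₀ :=
    (curve_cmdiff hsm (c'.symm a)).continuous.continuousAt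
  have hsource_nhds : c.source ∈ 𝓝 (φ t₀ (c'.symm a)) := by
    rw [hx0]
    exact extChartAt_source_mem_nhds y₀
  have hev1 : ∀ᶠ σ in 𝓝 t₀, φ σ (c'.symm a) ∈ c.source := hycont.eventually_mem hsource_nhds
  have hpsc : ContinuousAt (fun σ : ℝ => ((σ : ℝ), a)) t₀ :=
    (continuous_id.prodMk continuous_const).continuousAt
  have hev2 : ∀ᶠ σ in 𝓝 t₀, DifferentiableAt ℝ ψ (σ, a) := by
    filter_upwards [hpsc.tendsto.eventually hψev] with σ hσ
    exact hσ.differentiableAt (by norm_num)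
  have hev3 : ∀ᶠ σ in 𝓝 t₀, DifferentiableAt ℝ Fh (σ, a) := by
    filter_upwards [hpsc.tendsto.eventually hFhev] with σ hσ
    exact hσ.differentiableAt (by norm_num)
  have hubcont : ContinuousAt ub t₀ := hubd.continuousAt
  have hev5 : ∀ᶠ σ in 𝓝 t₀, ψ (t₀, ub σ) = ψ (σ, a) := by
    have h1 := hstrict.eventually_right_inverse
    filter_upwards [hcurva.continuousAt.tendsto.eventually h1] with σ hσ
    exact hσ
  have hev6 : ∀ᶠ σ in 𝓝 t₀, φ t₀ (c'.symm (ub σ)) ∈ c.source := by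
    have hcontc : ContinuousAt (fun σ => φ t₀ (c'.symm (ub σ))) t₀ := by
      have h1 : ContinuousAt (c'.symm : E → M) (ub t₀) := by
        rw [hub0]; exact hsymm_a.continuousAt
      have h2 : ContinuousAt (φ t₀) (c'.symm (ub t₀)) :=
        ((map_cmdiff hsm t₀) (c'.symm (ub t₀))).continuousAt
      exact (h2.comp h1).comp hubcont
    have hmem : c.source ∈ 𝓝 (φ t₀ (c'.symm (ub t₀))) := by
      rw [hub0, hx0]
      exact extChartAt_source_mem_nhds y₀
    exact hcontc.eventually_mem hmem
  have hev7 : ∀ᶠ σ in 𝓝 t₀, DifferentiableAt ℝ ψ (t₀, ub σ) := by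
    have hps : Filter.Tendsto (fun σ : ℝ => ((t₀ : ℝ), ub σ)) (𝓝 t₀) (𝓝 ((t₀ : ℝ), a)) := by
      have h2 : ContinuousAt (fun σ : ℝ => ((t₀ : ℝ), ub σ)) t₀ :=
        continuousAt_const.prodMk hubcont
      have h3 := h2.tendsto
      rwa [hub0] at h3
    filter_upwards [hps.eventually hψev] with σ hσ
    exact hσ.differentiableAt (by norm_num)
  -- the master identity
  have hmaster : ∀ᶠ σ in 𝓝 t₀, Bmap σ (Y σ) = W σ := by
    filter_upwards [hev1, hev2, hev3, hev5, hev6, hev7] with σ h1 h2 h3 h5 h6 h7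
    have hfφσ : MDifferentiableAt 𝓘(ℝ, E) 𝓘(ℝ, E) (φ σ) x₀ :=
      ((map_cmdiff hsm σ) x₀).mdifferentiableAt (by simp)
    have hgc : MDifferentiableAt 𝓘(ℝ, E) 𝓘(ℝ, E) (extChartAt 𝓘(ℝ, E) y₀) (φ σ x₀) := by
      apply mdiffAt_extChartAt'
      rw [← hx0]; exact h1
    have hgF : MDifferentiableAt 𝓘(ℝ, E) 𝓘(ℝ, ℝ) (F t₀) (φ σ x₀) :=
      ((Fmap_cmdiff hsmF t₀) (φ σ x₀)).mdifferentiableAt (by simp)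
    have heqy : φ t₀ (c'.symm (ub σ)) = φ σ x₀ := by
      have h5' : (extChartAt 𝓘(ℝ, E) y₀) (φ t₀ (c'.symm (ub σ)))
          = (extChartAt 𝓘(ℝ, E) y₀) (φ σ (c'.symm a)) := h5
      have h6' := (extChartAt 𝓘(ℝ, E) y₀).injOn h6 h1 h5'
      rwa [hx0] at h6'
    have hBσ : Bmap σ = (mfderiv 𝓘(ℝ, E) 𝓘(ℝ, E) (extChartAt 𝓘(ℝ, E) y₀) (φ σ x₀)).comp
        (mfdSelf (E := E) (φ σ) x₀) := by
      have hs2 := (hasFDerivAt_slice2 (f := ψ) (t := σ) (u := a) h2).fderiv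
      have h1' := fderiv_rep (g := (extChartAt 𝓘(ℝ, E) y₀ : M → E)) (f := φ σ) x₀ hgc hfφσ
      simp only [hBdef]
      rw [← hs2]
      rw [show (fun v => ψ (σ, v)) = fun u => (extChartAt 𝓘(ℝ, E) y₀)
        ((φ σ) ((extChartAt 𝓘(ℝ, E) x₀).symm u)) from rfl]
      rw [show a = extChartAt 𝓘(ℝ, E) x₀ x₀ from rfl]
      rw [h1']
      rfl
    have hκσ : kap σ = (mfderiv 𝓘(ℝ, E) 𝓘(ℝ, ℝ) (F t₀) (φ σ x₀)).comp
        (mfdSelf (E := E) (φ σ) x₀) := by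
      have hs2 := (hasFDerivAt_slice2 (f := Fh) (t := σ) (u := a) h3).fderiv
      have h1' := fderiv_rep (g := F t₀) (f := φ σ) x₀ hgF hfφσ
      simp only [hkapdef]
      rw [← hs2]
      rw [show (fun v => Fh (σ, v)) = fun u => (F t₀)
        ((φ σ) ((extChartAt 𝓘(ℝ, E) x₀).symm u)) from rfl]
      rw [show a = extChartAt 𝓘(ℝ, E) x₀ x₀ from rfl]
      rw [h1']
      rfl
    have hWσ : W σ = mfderiv 𝓘(ℝ, E) 𝓘(ℝ, E) (extChartAt 𝓘(ℝ, E) y₀) (φ σ x₀)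
        (isoVel (E := E) φ t₀ (c'.symm (ub σ))) := by
      have hh1 : HasDerivAt (fun τ => ψ (τ, ub σ)) (fderiv ℝ ψ (t₀, ub σ) (1, 0)) t₀ :=
        hasDerivAt_slice1 h7
      have hh2 := hasDerivAt_chart_curve hsm y₀ t₀ (c'.symm (ub σ))
        (by rw [heqy, ← hx0]; exact h1)
      have hun := hh1.unique hh2
      simp only [hWdef]
      rw [hun, heqy]
    have hham := hΦ.ham t₀ (c'.symm (ub σ))
    rw [heqy] at hham
    have hDbij := mfdSelf_bij hcos hΦ.toIsCosymplecticIsotopy σ x₀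
    have hkey : mfdSelf (E := E) (φ σ) x₀ (Y σ) = isoVel (E := E) φ t₀ (c'.symm (ub σ)) := by
      apply (hcos.nondeg (φ σ x₀)).1
      show ω (φ σ x₀) (mfdSelf (E := E) (φ σ) x₀ (Y σ))
          + η (φ σ x₀) (mfdSelf (E := E) (φ σ) x₀ (Y σ)) • η (φ σ x₀)
          = ω (φ σ x₀) (isoVel (E := E) φ t₀ (c'.symm (ub σ)))
          + η (φ σ x₀) (isoVel (E := E) φ t₀ (c'.symm (ub σ))) • η (φ σ x₀)
      ext w'
      obtain ⟨w, rfl⟩ := hDbij.2 w'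
      have hpe := hΦ.pull_eta σ x₀
      have hpo := hΦ.pull_omega σ x₀
      simp only [ContinuousLinearMap.add_apply, ContinuousLinearMap.smul_apply, smul_eq_mul]
      have hL : ((ω (φ σ x₀)) ((mfdSelf (E := E) (φ σ) x₀) (Y σ)))
            ((mfdSelf (E := E) (φ σ) x₀) w)
          + (η (φ σ x₀)) ((mfdSelf (E := E) (φ σ) x₀) (Y σ))
            * (η (φ σ x₀)) ((mfdSelf (E := E) (φ σ) x₀) w)
          = (kap σ) w := by
        rw [hpo (Y σ) w, hpe (Y σ), hpe w]
        rw [← hkapY σ, hLxapp (Y σ)]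
        simp
      rw [hL, hκσ]
      rw [hham (mfdSelf (E := E) (φ σ) x₀ w)]
      rfl
    rw [hBσ, hWσ, ← hkey]
    rfl
  -- differentiate the master identity
  have hBY : HasDerivAt (fun σ => Bmap σ (Y σ))
      ((Sψ (1, 0)).comp (J E) (Y t₀) + Bmap t₀ (eL.symm ((SF (1, 0)).comp (J E)))) t₀ :=
    hBd.clm_apply hYd
  have hBY' : HasDerivAt (fun σ => Bmap σ (Y σ)) (Sψ (0, e0.symm ξ0) (1, 0)) t₀ :=
    hWd.congr_of_eventuallyEq hmaster
  have huniq := hBY'.unique hBY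
  have hYt0 : Y t₀ = e0.symm ξ0 := by
    have h1 : Bmap t₀ (Y t₀) = W t₀ := hmaster.self_of_nhds
    have h2 : W t₀ = ξ0 := by simp only [hWdef, hub0]; rfl
    have h3 : Bmap t₀ (e0.symm ξ0) = ξ0 := by
      have h4 := e0.apply_symm_apply ξ0
      rwa [← ContinuousLinearEquiv.coe_coe e0, he0] at h4
    exact hB0bij.1 (by rw [h1, h2, h3])
  have hswap : Sψ (0, e0.symm ξ0) (1, 0) = (Sψ (1, 0)).comp (J E) (Y t₀) := by
    rw [hYt0]
    have h4 := hsymψ ((0 : ℝ), e0.symm ξ0) ((1 : ℝ), (0 : E))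
    simpa using h4
  have hz : Bmap t₀ (eL.symm ((SF (1, 0)).comp (J E))) = 0 := by
    rw [hswap] at huniq
    exact (left_eq_add.mp huniq)
  have hYder0 : eL.symm ((SF (1, 0)).comp (J E)) = 0 := by
    apply hB0bij.1
    rw [hz, map_zero]
  have hSF0 : (SF (1, 0)).comp (J E) = 0 := by
    have h1 := eL.apply_symm_apply ((SF (1, 0)).comp (J E))
    rw [hYder0] at h1
    simpa using h1.symm
  -- final assembly
  have hevu : ∀ᶠ u in 𝓝 a, DifferentiableAt ℝ Fh (t₀, u) := by
    have hps : ContinuousAt (fun u : E => ((t₀ : ℝ), u)) a :=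
      (continuous_const.prodMk continuous_id).continuousAt
    filter_upwards [hps.tendsto.eventually hFhev] with u hu
    exact hu.differentiableAt (by norm_num)
  have hLamEq : (fun u => Lam (E := E) F φ t₀ (c'.symm u)) =ᶠ[𝓝 a]
      (fun u => fderiv ℝ Fh (t₀, u) (1, 0)) := by
    filter_upwards [hevu] with u hu
    have hh1 : HasDerivAt (fun σ => Fh (σ, u)) (fderiv ℝ Fh (t₀, u) (1, 0)) t₀ :=
      hasDerivAt_slice1 hu
    have hh2 : HasDerivAt (fun σ => F t₀ (φ σ (c'.symm u)))
        (Lam (E := E) F φ t₀ (c'.symm u)) t₀ :=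
      hasDerivAt_F_curve hsm hsmF t₀ (c'.symm u)
    exact hh2.unique hh1
  have hT : HasFDerivAt (fun u => fderiv ℝ Fh (t₀, u)) (SF.comp (J E)) a :=
    hasFDerivAt_slice2 hDFd
  have hT2 := ((ContinuousLinearMap.apply ℝ ℝ ((1 : ℝ), (0 : E))).hasFDerivAt).comp a hT
  have hfinal : HasFDerivAt (fun u => fderiv ℝ Fh (t₀, u) (1, 0))
      ((ContinuousLinearMap.apply ℝ ℝ ((1 : ℝ), (0 : E))).comp (SF.comp (J E))) a := hT2
  have hzero : (ContinuousLinearMap.apply ℝ ℝ ((1 : ℝ), (0 : E))).comp (SF.comp (J E)) = 0 := by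
    ext w
    simp only [ContinuousLinearMap.comp_apply, ContinuousLinearMap.apply_apply,
      ContinuousLinearMap.zero_apply, J_apply]
    have h1 : SF (0, w) (1, 0) = SF (1, 0) (0, w) := hsymF _ _
    rw [h1]
    have h2 := congrArg (fun (L : E →L[ℝ] ℝ) => L w) hSF0
    simpa using h2
  rw [hzero] at hfinal
  exact hfinal.congr_of_eventuallyEq hLamEq

lemma locConst (hcos : IsCosymplectic η ω) (hΦ : IsCoHamIsotopy η ω φ F) (t₀ : ℝ) (x₀ : M) :
    ∀ᶠ x in 𝓝 x₀, Lam (E := E) F φ t₀ x = Lam (E := E) F φ t₀ x₀ := by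
  set c' : PartialEquiv M E := extChartAt 𝓘(ℝ, E) x₀ with hc'def
  set a : E := c' x₀ with hadef
  have hx0 : c'.symm a = x₀ := extChartAt_to_inv x₀
  have hder : ∀ᶠ u in 𝓝 a, HasFDerivAt (fun u => Lam (E := E) F φ t₀ (c'.symm u))
      (0 : E →L[ℝ] ℝ) u := by
    filter_upwards [extChartAt_target_mem_nhds (I := 𝓘(ℝ, E)) x₀] with u hu
    have hanch := anchored hcos hΦ t₀ (c'.symm u)
    have hsymmu : MDifferentiableAt 𝓘(ℝ, E) 𝓘(ℝ, E) c'.symm u := mdiffAt_extChartAt_symm hu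
    have hchart : MDifferentiableAt 𝓘(ℝ, E) 𝓘(ℝ, E)
        (extChartAt 𝓘(ℝ, E) (c'.symm u)) (c'.symm u) :=
      mdiffAt_extChartAt' (mem_extChartAt_source (c'.symm u))
    have hg : MDifferentiableAt 𝓘(ℝ, E) 𝓘(ℝ, E)
        (fun v => extChartAt 𝓘(ℝ, E) (c'.symm u) (c'.symm v)) u := hchart.comp u hsymmu
    have hgD : DifferentiableAt ℝ (fun v => extChartAt 𝓘(ℝ, E) (c'.symm u) (c'.symm v)) u := by
      rwa [mdifferentiableAt_iff_differentiableAt] at hg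
    have hcompose := hanch.comp u hgD.hasFDerivAt
    have h0 : ((0 : E →L[ℝ] ℝ).comp
        (fderiv ℝ (fun v => extChartAt 𝓘(ℝ, E) (c'.symm u) (c'.symm v)) u)) = 0 := by
      ext w; simp
    rw [h0] at hcompose
    have hev : (fun v => Lam (E := E) F φ t₀ (c'.symm v)) =ᶠ[𝓝 u]
        (fun w => Lam (E := E) F φ t₀ ((extChartAt 𝓘(ℝ, E) (c'.symm u)).symm w)) ∘
          (fun v => extChartAt 𝓘(ℝ, E) (c'.symm u) (c'.symm v)) := by
      filter_upwards [hsymmu.continuousAt.eventually_mem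
        (extChartAt_source_mem_nhds (I := 𝓘(ℝ, E)) (c'.symm u))] with v hv
      simp only [Function.comp_apply]
      rw [(extChartAt 𝓘(ℝ, E) (c'.symm u)).left_inv hv]
    exact hcompose.congr_of_eventuallyEq hev
  obtain ⟨ε, hε, hball⟩ := Metric.mem_nhds_iff.mp hder
  have hconst : ∀ u ∈ Metric.ball a ε, Lam (E := E) F φ t₀ (c'.symm u)
      = Lam (E := E) F φ t₀ (c'.symm a) := by
    intro u hu
    have hdiff : ∀ v ∈ Metric.ball a ε,
        DifferentiableAt ℝ (fun u => Lam (E := E) F φ t₀ (c'.symm u)) v :=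
      fun v hv => (hball hv).differentiableAt
    have hbound : ∀ v ∈ Metric.ball a ε,
        ‖fderiv ℝ (fun u => Lam (E := E) F φ t₀ (c'.symm u)) v‖ ≤ 0 := by
      intro v hv
      rw [(hball hv).fderiv]
      simp
    have hmv := Convex.norm_image_sub_le_of_norm_fderiv_le hdiff hbound (convex_ball a ε)
      (Metric.mem_ball_self hε) hu
    rw [zero_mul] at hmv
    exact sub_eq_zero.mp (norm_le_zero_iff.mp hmv)
  have hxx : ∀ᶠ x in 𝓝 x₀, x ∈ c'.source ∧ c' x ∈ Metric.ball a ε := by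
    have h1 := extChartAt_source_mem_nhds (I := 𝓘(ℝ, E)) x₀
    have h2 : ContinuousAt (c' : M → E) x₀ := continuousAt_extChartAt x₀
    filter_upwards [h1, h2.eventually_mem (Metric.ball_mem_nhds a hε)] with x hx1 hx2
    exact ⟨hx1, hx2⟩
  filter_upwards [hxx] with x hx
  have h3 := hconst (c' x) hx.2
  rwa [c'.left_inv hx.1, hx0] at h3

lemma LamConst (hcos : IsCosymplectic η ω) (hΦ : IsCoHamIsotopy η ω φ F) [ConnectedSpace M]
    (t₀ : ℝ) (x y : M) : Lam (E := E) F φ t₀ x = Lam (E := E) F φ t₀ y := by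
  have hclopen : IsClopen {z : M | Lam (E := E) F φ t₀ z = Lam (E := E) F φ t₀ x} := by
    constructor
    · rw [← isOpen_compl_iff, isOpen_iff_mem_nhds]
      intro z hz
      filter_upwards [locConst hcos hΦ t₀ z] with w hw
      intro hcon
      have hcon2 : Lam (E := E) F φ t₀ w = Lam (E := E) F φ t₀ x := hcon
      have hzz : Lam (E := E) F φ t₀ z = Lam (E := E) F φ t₀ x := by
        rw [← hw]; exact hcon2
      exact hz hzz
    · rw [isOpen_iff_mem_nhds]
      intro z hz
      filter_upwards [locConst hcos hΦ t₀ z] with w hw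
      have hz2 : Lam (E := E) F φ t₀ z = Lam (E := E) F φ t₀ x := hz
      exact hw.trans hz2
  have huniv := hclopen.eq_univ ⟨x, rfl⟩
  have hy : y ∈ {z : M | Lam (E := E) F φ t₀ z = Lam (E := E) F φ t₀ x} := by
    rw [huniv]; exact Set.mem_univ y
  exact hy.symm

lemma exists_zero (hΦ : IsCoHamIsotopy η ω φ F) [CompactSpace M] [Nonempty M] (t : ℝ) :
    ∃ x : M, Lam (E := E) F φ t x = 0 := by
  have hFc : Continuous (F t) := (Fmap_cmdiff hΦ.smoothF t).continuous
  obtain ⟨y, -, hy⟩ := isCompact_univ.exists_isMaxOn Set.univ_nonempty hFc.continuousOn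
  obtain ⟨x, hx⟩ := (hΦ.bij t).2 y
  refine ⟨x, ?_⟩
  have hmd : MDifferentiableAt 𝓘(ℝ, E) 𝓘(ℝ, ℝ) (F t) y :=
    ((Fmap_cmdiff hΦ.smoothF t) y).mdifferentiableAt (by simp)
  have h0 : mfderiv 𝓘(ℝ, E) 𝓘(ℝ, ℝ) (F t) y = 0 := by
    rw [mfderiv_eq_fderiv_comp (F t) y hmd]
    have hmax : IsLocalMax (fun u => F t ((extChartAt 𝓘(ℝ, E) y).symm u))
        (extChartAt 𝓘(ℝ, E) y y) := by
      apply Filter.Eventually.of_forall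
      intro u
      show F t ((extChartAt 𝓘(ℝ, E) y).symm u)
          ≤ F t ((extChartAt 𝓘(ℝ, E) y).symm (extChartAt 𝓘(ℝ, E) y y))
      rw [extChartAt_to_inv]
      exact hy (Set.mem_univ _)
    exact hmax.fderiv_eq_zero
  show mfderiv 𝓘(ℝ, E) 𝓘(ℝ, ℝ) (F t) (φ t x) (isoVel (E := E) φ t x) = 0
  rw [hx, h0]
  rfl

lemma Lam_eq_sq (hcos : IsCosymplectic η ω) (hΦ : IsCoHamIsotopy η ω φ F) (t : ℝ) (x : M) :
    Lam (E := E) F φ t x = Cfun η φ t x * Cfun η φ t x := by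
  have h := hΦ.ham t x (isoVel (E := E) φ t x)
  have hω : ω (φ t x) (isoVel (E := E) φ t x) (isoVel (E := E) φ t x) = 0 := by
    have h2 := hcos.antisymm (φ t x) (isoVel (E := E) φ t x) (isoVel (E := E) φ t x)
    linarith
  have hC : Cfun η φ t x = η (φ t x) (isoVel (E := E) φ t x) := rfl
  show mfderiv 𝓘(ℝ, E) 𝓘(ℝ, ℝ) (F t) (φ t x) (isoVel (E := E) φ t x)
      = Cfun η φ t x * Cfun η φ t x
  rw [← h, hω, hC]
  exact zero_add _

end CoHamZero

/-- On a closed connected cosymplectic manifold, for any co-Hamiltonian isotopy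
`Φ = {φ_t}` the function `x ↦ ∫₀¹ η(φ̇_s)(φ_s(x)) ds` is identically zero. -/
theorem coHam_eta_integral_zero
    {E : Type*} [NormedAddCommGroup E] [NormedSpace ℝ E] [FiniteDimensional ℝ E]
    {M : Type*} [TopologicalSpace M] [ChartedSpace E M]
    [IsManifold 𝓘(ℝ, E) (⊤ : ℕ∞) M] [CompactSpace M] [ConnectedSpace M]
    (η : M → E →L[ℝ] ℝ) (ω : M → E →L[ℝ] E →L[ℝ] ℝ)
    (hcos : IsCosymplectic η ω)
    (φ : ℝ → M → M) (F : ℝ → M → ℝ)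
    (hΦ : IsCoHamIsotopy η ω φ F) :
    ∀ x : M, (∫ s in (0:ℝ)..1, Cfun η φ s x) = 0 := by
  intro x
  haveI : Nonempty M := ⟨x⟩
  have hzero : ∀ s : ℝ, Cfun η φ s x = 0 := by
    intro s
    obtain ⟨x', hx'⟩ := CoHamZero.exists_zero (E := E) (M := M) hΦ s
    have hconst := CoHamZero.LamConst hcos hΦ s x x'
    have h1 : CoHamZero.Lam (E := E) F φ s x = 0 := by rw [hconst, hx']
    have h2 := CoHamZero.Lam_eq_sq hcos hΦ s x
    exact mul_self_eq_zero.mp (by rw [← h2]; exact h1)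
  simp only [hzero]
  simp

end
end

section
/- Let X be a co-Hamiltonian vector field on a closed connected cosymplectic manifold (M, η, ω) with I_{η,ω}(X) = dG for a smooth function G : M → ℝ, and let Φ_X = {φ_s} be the flow of X. Then G is constant along the orbits of Φ_X: G ∘ φ_s = G for all s ∈ [0, 1]. Moreover, the function η(X) vanishes identically on M. -/
open Manifold MeasureTheory Function Set

noncomputable section

variable {E : Type*} [NormedAddCommGroup E] [NormedSpace ℝ E]
variable {M : Type*} [TopologicalSpace M] [ChartedSpace E M]

/-- Let `X` be a co-Hamiltonian vector field on a closed connected cosymplectic manifold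
with `I_{η,ω}(X) = dG`, and flow `Φ_X = {φ_s}`.  Then `G` is constant along the orbits of
the flow, `G ∘ φ_s = G` for all `s ∈ [0,1]`, and moreover `η(X)` vanishes identically. -/
theorem energy_constant_along_orbits
    {E : Type*} [NormedAddCommGroup E] [NormedSpace ℝ E] [FiniteDimensional ℝ E]
    {M : Type*} [TopologicalSpace M] [ChartedSpace E M]
    [IsManifold 𝓘(ℝ, E) (⊤ : ℕ∞) M] [CompactSpace M] [ConnectedSpace M]
    (η : M → E →L[ℝ] ℝ) (ω : M → E →L[ℝ] E →L[ℝ] ℝ)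
    (hcos : IsCosymplectic η ω)
    (X : M → E) (hX : ContMDiff 𝓘(ℝ, E) 𝓘(ℝ, E) (⊤ : ℕ∞) X)
    (G : M → ℝ) (hG : ContMDiff 𝓘(ℝ, E) 𝓘(ℝ, ℝ) (⊤ : ℕ∞) G)
    (hLη : ∀ x (v : E), mfderiv 𝓘(ℝ, E) 𝓘(ℝ, ℝ) (fun y => η y (X y)) x v = 0)
    (hLω : IsClosedOneForm fun y => ω y (X y))
    (hIX : ∀ x (v : E),
      ω x (X x) v + η x (X x) * η x v = mfderiv 𝓘(ℝ, E) 𝓘(ℝ, ℝ) G x v)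
    (φ : ℝ → M → M)
    (hsmooth : ContMDiff (𝓘(ℝ, ℝ).prod 𝓘(ℝ, E)) 𝓘(ℝ, E) (⊤ : ℕ∞) fun p : ℝ × M => φ p.1 p.2)
    (hinit : ∀ x, φ 0 x = x)
    (hflow : ∀ t x, isoVel φ t x = X (φ t x)) :
    (∀ s ∈ Icc (0:ℝ) 1, ∀ x : M, G (φ s x) = G x) ∧
      ∀ x : M, η x (X x) = 0 := by
  have hωXX : ∀ p : M, ω p (X p) (X p) = 0 := by
    intro p; have := hcos.antisymm p (X p) (X p); linarith
  have hhsm : ContMDiff 𝓘(ℝ, E) 𝓘(ℝ, ℝ) (⊤ : ℕ∞) (fun y => η y (X y)) :=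
    hcos.smooth_eta.clm_apply hX
  have key : ∀ x : M, (∀ s : ℝ, G (φ s x) = G x) ∧ η x (X x) = 0 := by
    intro x
    have hc : ContMDiff 𝓘(ℝ, ℝ) 𝓘(ℝ, E) (⊤ : ℕ∞) (fun s => φ s x) :=
      hsmooth.comp (contMDiff_id.prodMk contMDiff_const)
    have hcd : ∀ s, MDifferentiableAt 𝓘(ℝ, ℝ) 𝓘(ℝ, E) (fun s => φ s x) s :=
      fun s => (hc s).mdifferentiableAt (by simp)
    have chain : ∀ (F : M → ℝ), ContMDiff 𝓘(ℝ, E) 𝓘(ℝ, ℝ) (⊤ : ℕ∞) F →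
        ∀ s : ℝ, deriv (fun t => F (φ t x)) s
          = mfderiv 𝓘(ℝ, E) 𝓘(ℝ, ℝ) F (φ s x) (X (φ s x)) := by
      intro F hF s
      have hFd : MDifferentiableAt 𝓘(ℝ, E) 𝓘(ℝ, ℝ) F (φ s x) :=
        (hF (φ s x)).mdifferentiableAt (by simp)
      have hcomp := mfderiv_comp (I' := 𝓘(ℝ, E)) s hFd (hcd s)
      have h2 : (mfderiv 𝓘(ℝ, ℝ) 𝓘(ℝ, E) (fun t => φ t x) s)
          (show TangentSpace 𝓘(ℝ, ℝ) s from (1:ℝ)) = X (φ s x) := hflow s x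
      calc deriv (fun t => F (φ t x)) s
          = fderiv ℝ (F ∘ fun t => φ t x) s (1:ℝ) := fderiv_apply_one_eq_deriv.symm
        _ = (show ℝ from (mfderiv 𝓘(ℝ, ℝ) 𝓘(ℝ, ℝ) (F ∘ fun t => φ t x) s)
              (show TangentSpace 𝓘(ℝ, ℝ) s from (1:ℝ))) := by
                rw [mfderiv_eq_fderiv]; rfl
        _ = (show ℝ from mfderiv 𝓘(ℝ, E) 𝓘(ℝ, ℝ) F (φ s x)
              ((mfderiv 𝓘(ℝ, ℝ) 𝓘(ℝ, E) (fun t => φ t x) s)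
                (show TangentSpace 𝓘(ℝ, ℝ) s from (1:ℝ)))) := by rw [hcomp]; rfl
        _ = (show ℝ from mfderiv 𝓘(ℝ, E) 𝓘(ℝ, ℝ) F (φ s x) (X (φ s x))) := by rw [h2]
    have hdiff : ∀ (F : M → ℝ), ContMDiff 𝓘(ℝ, E) 𝓘(ℝ, ℝ) (⊤ : ℕ∞) F →
        Differentiable ℝ (fun t => F (φ t x)) := fun F hF =>
      ((hF.comp hc).mdifferentiable (by simp)).differentiable
    -- η(X) is constant along the orbit
    have hvconst : ∀ s : ℝ, η (φ s x) (X (φ s x)) = η x (X x) := by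
      intro s
      have h0 : ∀ t : ℝ, deriv (fun t => η (φ t x) (X (φ t x))) t = 0 := by
        intro t; rw [chain _ hhsm t]; exact hLη _ _
      have := is_const_of_deriv_eq_zero (hdiff _ hhsm) h0 s 0
      simpa [hinit x] using this
    set a := η x (X x) with ha
    have hu' : ∀ s : ℝ, deriv (fun t => G (φ t x)) s = a ^ 2 := by
      intro s
      rw [chain G hG s, ← hIX, hωXX, hvconst s]; ring
    have hulin : ∀ s : ℝ, G (φ s x) = G (φ 0 x) + a ^ 2 * s := by
      intro s
      have hlin : Differentiable ℝ (fun t : ℝ => a ^ 2 * t) :=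
        differentiable_id.const_mul _
      have hw : Differentiable ℝ (fun t : ℝ => G (φ t x) - a ^ 2 * t) :=
        (hdiff G hG).sub hlin
      have hw0 : ∀ t : ℝ, deriv (fun t : ℝ => G (φ t x) - a ^ 2 * t) t = 0 := by
        intro t
        have hd : deriv (fun t : ℝ => a ^ 2 * t) t = a ^ 2 := by
          simpa using ((hasDerivAt_id t).const_mul (a ^ 2)).deriv
        rw [deriv_fun_sub ((hdiff G hG) t) (hlin t), hu' t, hd, sub_self]
      have := is_const_of_deriv_eq_zero hw hw0 s 0
      simp only [mul_zero, sub_zero] at this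
      linarith
    have ha0 : a = 0 := by
      by_contra h
      have hpos : 0 < a ^ 2 := by positivity
      obtain ⟨y, -, hy⟩ := isCompact_univ.exists_isMaxOn (univ_nonempty (α := M))
        hG.continuous.continuousOn
      set s := (G y - G (φ 0 x) + 1) / a ^ 2 with hs
      have h1 : G (φ s x) = G (φ 0 x) + a ^ 2 * s := hulin s
      have h2 : G (φ s x) ≤ G y := hy (mem_univ (φ s x))
      have h3 : a ^ 2 * s = G y - G (φ 0 x) + 1 := by
        rw [hs]; field_simp
      linarith
    refine ⟨fun s => ?_, ha0⟩
    rw [hulin s, ha0]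
    simp [hinit x]
  exact ⟨fun s _ x => (key x).1 s, fun x => (key x).2⟩

end
end
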